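/- Suppose the monodromy matrix at (E*, 0) satisfies Ψ(1; E*, 0) = I (the condition at a Dirac point with k = 0). Then the discriminant D(E,δ) = tr Ψ(1; E, δ) is differentiable in each variable at (E*, 0) and both first partial derivatives vanish there: ∂D/∂E(E*, 0) = 0 and ∂D/∂δ(E*, 0) = 0. -/

import Mathlib

open Matrix
open scoped NNReal


namespace DiracAux

attribute [local instance] Matrix.linftyOpNormedRing Matrix.linftyOpNormedAlgebra

lemma entry_abs_le_norm (M : Matrix (Fin 2) (Fin 2) ℝ) (i j : Fin 2) : |M i j| ≤ ‖M‖ := by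
  rw [Matrix.linfty_opNorm_def]
  have h1 : ‖M i j‖₊ ≤ ∑ k, ‖M i k‖₊ :=
    Finset.single_le_sum (f := fun k => ‖M i k‖₊) (fun _ _ => zero_le) (Finset.mem_univ j)
  have h2 : (∑ k, ‖M i k‖₊) ≤ (Finset.univ : Finset (Fin 2)).sup fun i => ∑ j, ‖M i j‖₊ :=
    Finset.le_sup (f := fun i => ∑ j, ‖M i j‖₊) (Finset.mem_univ i)
  calc |M i j| = ((‖M i j‖₊ : ℝ)) := by rw [coe_nnnorm, Real.norm_eq_abs]
    _ ≤ _ := NNReal.coe_le_coe.mpr (h1.trans h2)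

lemma trace_abs_le (M : Matrix (Fin 2) (Fin 2) ℝ) : |M.trace| ≤ 2 * ‖M‖ := by
  rw [Matrix.trace_fin_two]
  have h1 := entry_abs_le_norm M 0 0
  have h2 := entry_abs_le_norm M 1 1
  calc |M 0 0 + M 1 1| ≤ |M 0 0| + |M 1 1| := abs_add_le _ _
    _ ≤ 2 * ‖M‖ := by linarith

lemma hasDerivAt_matrix {f : ℝ → Matrix (Fin 2) (Fin 2) ℝ} {f' : Matrix (Fin 2) (Fin 2) ℝ} {x : ℝ}
    (h : ∀ i j, HasDerivAt (fun y => f y i j) (f' i j) x) : HasDerivAt f f' x := by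
  have key : ∀ M : Matrix (Fin 2) (Fin 2) ℝ,
      M = ∑ i : Fin 2, ∑ j : Fin 2, (M i j) • single i j (1 : ℝ) := by
    intro M
    conv_lhs => rw [matrix_eq_sum_single M]
    refine Finset.sum_congr rfl fun i _ => Finset.sum_congr rfl fun j _ => ?_
    rw [smul_single, smul_eq_mul, mul_one]
  have h' : HasDerivAt (fun y => ∑ i : Fin 2, ∑ j : Fin 2,
      (f y i j) • single i j (1 : ℝ))
      (∑ i : Fin 2, ∑ j : Fin 2, (f' i j) • single i j (1 : ℝ)) x := by
    apply HasDerivAt.fun_sum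
    intro i _
    apply HasDerivAt.fun_sum
    intro j _
    exact (h i j).smul_const _
  convert h' using 1
  · funext y; exact key (f y)
  · exact key f'

lemma key (A0 B : ℝ → Matrix (Fin 2) (Fin 2) ℝ)
    (hBc : Continuous B)
    (htrA0 : ∀ x, (A0 x).trace = 0) (htrB : ∀ x, (B x).trace = 0)
    (P : ℝ → ℝ → Matrix (Fin 2) (Fin 2) ℝ)
    (hP0 : ∀ t, P t 0 = 1)
    (hP : ∀ t x : ℝ, ∀ i j, HasDerivAt (fun y => P t y i j) (((A0 x + t • B x) * P t x) i j) x)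
    (hDirac : P 0 1 = 1) :
    HasDerivAt (fun t => (P t 1).trace) 0 0 := by
  -- matrix-level derivative
  have hPmat : ∀ t x : ℝ, HasDerivAt (fun y => P t y) ((A0 x + t • B x) * P t x) x :=
    fun t x => hasDerivAt_matrix (hP t x)
  have hΦe : ∀ (x : ℝ) i j, HasDerivAt (fun y => P 0 y i j) ((A0 x * P 0 x) i j) x := by
    intro x i j; simpa using hP 0 x i j
  have hΦmat : ∀ x : ℝ, HasDerivAt (fun y => P 0 y) (A0 x * P 0 x) x := by
    intro x; simpa using hPmat 0 x
  have htr : ∀ x, A0 x 0 0 + A0 x 1 1 = 0 := by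
    intro x; have := htrA0 x; rwa [Matrix.trace_fin_two] at this
  -- determinant is constant 1
  have hdet : ∀ x, (P 0 x).det = 1 := by
    have hd : ∀ x, HasDerivAt (fun y => (P 0 y).det) 0 x := by
      intro x
      have h := ((hΦe x 0 0).fun_mul (hΦe x 1 1)).fun_sub ((hΦe x 0 1).fun_mul (hΦe x 1 0))
      have e0 : (fun y => P 0 y 0 0 * P 0 y 1 1 - P 0 y 0 1 * P 0 y 1 0)
          = fun y => (P 0 y).det := by
        funext y; rw [Matrix.det_fin_two]
      rw [e0] at h
      refine h.congr_deriv ?_; symm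
      have ht := htr x
      simp only [Matrix.mul_apply, Fin.sum_univ_two]
      linear_combination (-(P 0 x 0 0 * P 0 x 1 1) + P 0 x 0 1 * P 0 x 1 0) * ht
    have hconst : ∀ x, (P 0 x).det = (P 0 0).det := by
      intro x
      exact is_const_of_deriv_eq_zero (fun y => (hd y).differentiableAt)
        (fun y => (hd y).deriv) x 0
    intro x
    rw [hconst x, hP0 0, Matrix.det_one]
  obtain ⟨Q, hQdef⟩ : ∃ Q : ℝ → Matrix (Fin 2) (Fin 2) ℝ, ∀ x, Q x = (P 0 x).adjugate :=
    ⟨_, fun _ => rfl⟩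
  have hΦQ : ∀ x, P 0 x * Q x = 1 := by
    intro x; rw [hQdef x, Matrix.mul_adjugate, hdet, one_smul]
  have hQΦ : ∀ x, Q x * P 0 x = 1 := by
    intro x; rw [hQdef x, Matrix.adjugate_mul, hdet, one_smul]
  -- entries of Q
  have hQentry : ∀ x, Q x = !![P 0 x 1 1, -(P 0 x 0 1); -(P 0 x 1 0), P 0 x 0 0] := by
    intro x; rw [hQdef x, Matrix.adjugate_fin_two]
  -- derivative of Q
  have hQe : ∀ (x : ℝ) i j, HasDerivAt (fun y => Q y i j) ((-(Q x * A0 x)) i j) x := by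
    intro x i j
    have e : ∀ y, Q y = !![P 0 y 1 1, -(P 0 y 0 1); -(P 0 y 1 0), P 0 y 0 0] := hQentry
    have ht := htr x
    have h00 : HasDerivAt (fun y => Q y 0 0) ((-(Q x * A0 x)) 0 0) x := by
      have h := hΦe x 1 1
      have e1 : (fun y => Q y 0 0) = fun y => P 0 y 1 1 := by funext y; rw [e y]; simp
      rw [e1]
      convert h using 1
      simp only [Matrix.neg_apply, Matrix.mul_apply, Fin.sum_univ_two, hQentry x]
      simp
      linear_combination (-(P 0 x 1 1)) * ht
    have h01 : HasDerivAt (fun y => Q y 0 1) ((-(Q x * A0 x)) 0 1) x := by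
      have h := (hΦe x 0 1).fun_neg
      have e1 : (fun y => Q y 0 1) = fun y => -(P 0 y 0 1) := by funext y; rw [e y]; simp
      rw [e1]
      refine h.congr_deriv ?_; symm
      simp only [Matrix.neg_apply, Matrix.mul_apply, Fin.sum_univ_two, hQentry x]
      simp
      linear_combination (P 0 x 0 1) * ht
    have h10 : HasDerivAt (fun y => Q y 1 0) ((-(Q x * A0 x)) 1 0) x := by
      have h := (hΦe x 1 0).fun_neg
      have e1 : (fun y => Q y 1 0) = fun y => -(P 0 y 1 0) := by funext y; rw [e y]; simp
      rw [e1]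
      refine h.congr_deriv ?_; symm
      simp only [Matrix.neg_apply, Matrix.mul_apply, Fin.sum_univ_two, hQentry x]
      simp
      linear_combination (P 0 x 1 0) * ht
    have h11 : HasDerivAt (fun y => Q y 1 1) ((-(Q x * A0 x)) 1 1) x := by
      have h := hΦe x 0 0
      have e1 : (fun y => Q y 1 1) = fun y => P 0 y 0 0 := by funext y; rw [e y]; simp
      rw [e1]
      convert h using 1
      simp only [Matrix.neg_apply, Matrix.mul_apply, Fin.sum_univ_two, hQentry x]
      simp
      linear_combination (-(P 0 x 0 0)) * ht
    fin_cases i <;> fin_cases j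
    · exact h00
    · exact h01
    · exact h10
    · exact h11
  have hQmat : ∀ x : ℝ, HasDerivAt Q (-(Q x * A0 x)) x := fun x => hasDerivAt_matrix (hQe x)
  -- derivative of G t x = Q x * P t x
  have hG' : ∀ t x : ℝ, HasDerivAt (fun y => Q y * P t y) (t • (Q x * B x * P t x)) x := by
    intro t x
    have h := (hQmat x).fun_mul (hPmat t x)
    refine h.congr_deriv ?_; symm
    simp only [mul_add, add_mul, smul_mul_assoc, mul_smul_comm, neg_mul, mul_assoc]
    abel
  -- continuity
  have contP : ∀ t, Continuous fun x => P t x :=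
    fun t => continuous_iff_continuousAt.2 fun x => (hPmat t x).continuousAt
  have contQ : Continuous Q :=
    continuous_iff_continuousAt.2 fun x => (hQmat x).continuousAt
  -- bounds
  obtain ⟨MΦ, hMΦ⟩ := isCompact_Icc.exists_bound_of_continuousOn
    (s := Set.Icc (0:ℝ) 1) (contP 0).continuousOn
  have hMΦ1 : (1:ℝ) ≤ MΦ := by
    have := hMΦ 0 (by constructor <;> norm_num)
    rwa [hP0 0, norm_one] at this
  obtain ⟨K, hK⟩ := isCompact_Icc.exists_bound_of_continuousOn
    (s := Set.Icc (0:ℝ) 1) (contQ.matrix_mul hBc).continuousOn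
  have hK0 : (0:ℝ) ≤ K := le_trans (norm_nonneg _) (hK 0 (by constructor <;> norm_num))
  set t0 : ℝ := 1 / (2 * (K + 1) * MΦ) with ht0def
  have ht0pos : 0 < t0 := by
    apply one_div_pos.2; positivity
  set C : ℝ := 4 * MΦ^2 * (K+1)^2 with hCdef
  have hCpos : 0 < C := by positivity
  -- the central quadratic estimate
  have EST : ∀ t : ℝ, |t| ≤ t0 → |(P t 1).trace - 2| ≤ C * t^2 := by
    intro t ht
    -- sup of ‖P t‖ on [0,1]
    obtain ⟨xm, hxm, hmax⟩ := isCompact_Icc.exists_isMaxOn (s := Set.Icc (0:ℝ) 1)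
      ⟨0, by constructor <;> norm_num⟩ ((contP t).norm.continuousOn)
    set S : ℝ := ‖P t xm‖ with hSdef
    have hS : ∀ x ∈ Set.Icc (0:ℝ) 1, ‖P t x‖ ≤ S := fun x hx => hmax hx
    have hS0 : 0 ≤ S := norm_nonneg _
    -- MVT for G
    have hG0 : Q 0 * P t 0 = 1 := by
      rw [hP0 t, mul_one, hQdef 0, hP0 0, Matrix.adjugate_one]
    have hGdiff : ∀ x ∈ Set.Icc (0:ℝ) 1,
        ‖Q x * P t x - 1‖ ≤ (|t| * (K+1) * S) * (x - 0) := by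
      intro x hx
      have h0 : ∀ x ∈ Set.Icc (0:ℝ) 1,
          ‖Q x * P t x - Q 0 * P t 0‖ ≤ (|t| * (K+1) * S) * (x - 0) :=
        norm_image_sub_le_of_norm_deriv_le_segment'
          (f := fun y => Q y * P t y) (f' := fun y => t • (Q y * B y * P t y))
          (a := 0) (b := 1) (C := |t| * (K+1) * S)
          (fun y _ => (hG' t y).hasDerivWithinAt)
          (fun y hy => by
            rw [norm_smul, Real.norm_eq_abs]
            have h1 : ‖Q y * B y * P t y‖ ≤ (K+1) * S := by
              calc ‖Q y * B y * P t y‖ ≤ ‖Q y * B y‖ * ‖P t y‖ := norm_mul_le _ _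
                _ ≤ (K+1) * S := by
                    apply mul_le_mul _ (hS y (Set.mem_Icc.2 ⟨hy.1, le_of_lt hy.2⟩))
                      (norm_nonneg _) (by linarith)
                    have := hK y (Set.mem_Icc.2 ⟨hy.1, le_of_lt hy.2⟩)
                    linarith
            calc |t| * ‖Q y * B y * P t y‖ ≤ |t| * ((K+1) * S) :=
                  mul_le_mul_of_nonneg_left h1 (abs_nonneg t)
              _ = |t| * (K+1) * S := by ring)
      have := h0 x hx
      rwa [hG0] at this
    -- bound on P t - P 0
    have hPdiff : ∀ x ∈ Set.Icc (0:ℝ) 1, ‖P t x - P 0 x‖ ≤ MΦ * (|t| * (K+1) * S) := by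
      intro x hx
      have e : P t x - P 0 x = P 0 x * (Q x * P t x - 1) := by
        rw [mul_sub, mul_one, ← mul_assoc, hΦQ x, one_mul]
      rw [e]
      calc ‖P 0 x * (Q x * P t x - 1)‖ ≤ ‖P 0 x‖ * ‖Q x * P t x - 1‖ := norm_mul_le _ _
        _ ≤ MΦ * (|t| * (K+1) * S) := by
            apply mul_le_mul (hMΦ x hx) _ (norm_nonneg _) (by linarith)
            have := hGdiff x hx
            have hx1 : x - 0 ≤ 1 := by have := hx.2; linarith
            have hC0 : 0 ≤ |t| * (K+1) * S := by positivity
            nlinarith [this, mul_le_mul_of_nonneg_left hx1 hC0]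
    -- bootstrap: S ≤ 2 MΦ
    have hSb : S ≤ 2 * MΦ := by
      have h1 : S ≤ ‖P 0 xm‖ + ‖P t xm - P 0 xm‖ := by
        have : P t xm = P 0 xm + (P t xm - P 0 xm) := by abel
        calc S = ‖P t xm‖ := rfl
          _ = ‖P 0 xm + (P t xm - P 0 xm)‖ := by rw [← this]
          _ ≤ _ := norm_add_le _ _
      have h2 := hPdiff xm hxm
      have h3 := hMΦ xm hxm
      have hpos : (0:ℝ) < (K+1)*MΦ := by positivity
      have htK : |t| * (K+1) * MΦ ≤ 1/2 := by
        have h5 : |t| ≤ 1 / (2 * (K + 1) * MΦ) := ht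
        have h6 := mul_le_mul_of_nonneg_right h5 (le_of_lt hpos)
        calc |t| * (K+1) * MΦ = |t| * ((K+1)*MΦ) := by ring
          _ ≤ 1/(2*(K+1)*MΦ) * ((K+1)*MΦ) := h6
          _ = 1/2 := by
              field_simp
      have h4 : MΦ * (|t| * (K+1) * S) ≤ (1/2)*S := by
        nlinarith [mul_le_mul_of_nonneg_right htK hS0]
      linarith
    have hPdiff2 : ∀ x ∈ Set.Icc (0:ℝ) 1, ‖P t x - P 0 x‖ ≤ 2 * MΦ^2 * (K+1) * |t| := by
      intro x hx
      have h8 := hPdiff x hx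
      have h9 : (0:ℝ) ≤ MΦ * |t| * (K+1) :=
        mul_nonneg (mul_nonneg (by linarith) (abs_nonneg t)) (by linarith)
      nlinarith [mul_le_mul_of_nonneg_left hSb h9]
    -- trace function g
    have hgentry : ∀ (x : ℝ) (i j : Fin 2), HasDerivAt (fun y => (Q y * P t y) i j)
        ((t • (Q x * B x * P t x)) i j) x := by
      intro x i j
      have e1 : (fun y => (Q y * P t y) i j)
          = fun y => Q y i 0 * P t y 0 j + Q y i 1 * P t y 1 j := by
        funext y; rw [Matrix.mul_apply, Fin.sum_univ_two]
      rw [e1]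
      have hd := ((hQe x i 0).fun_mul (hP t x 0 j)).fun_add ((hQe x i 1).fun_mul (hP t x 1 j))
      refine hd.congr_deriv ?_; symm
      simp only [Matrix.smul_apply, Matrix.mul_apply, Matrix.neg_apply, Matrix.add_apply,
        Fin.sum_univ_two, smul_eq_mul]
      ring
    have hg' : ∀ x : ℝ, HasDerivAt (fun y => (Q y * P t y).trace)
        ((t • (Q x * B x * P t x)).trace) x := by
      intro x
      have e : (fun y => (Q y * P t y).trace)
          = fun y => (Q y * P t y) 0 0 + (Q y * P t y) 1 1 := by
        funext y; rw [Matrix.trace_fin_two]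
      have he' : (t • (Q x * B x * P t x)).trace
          = (t • (Q x * B x * P t x)) 0 0 + (t • (Q x * B x * P t x)) 1 1 := by
        rw [Matrix.trace_fin_two]
      rw [e, he']
      exact (hgentry x 0 0).add (hgentry x 1 1)
    -- bound on |g'|
    have hgbound : ∀ x ∈ Set.Ico (0:ℝ) 1, |(t • (Q x * B x * P t x)).trace| ≤ C * t^2 := by
      intro x hx
      have hxI : x ∈ Set.Icc (0:ℝ) 1 := Set.mem_Icc.2 ⟨hx.1, le_of_lt hx.2⟩
      have e : Q x * B x * P t x = Q x * B x * (P t x - P 0 x) + Q x * B x * P 0 x := by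
        rw [mul_sub]; abel
      have htr0 : (Q x * B x * P 0 x).trace = 0 := by
        rw [Matrix.trace_mul_comm, ← mul_assoc, hΦQ x, one_mul, htrB x]
      have e2 : (t • (Q x * B x * P t x)).trace = t * (Q x * B x * (P t x - P 0 x)).trace := by
        rw [Matrix.trace_smul, e, Matrix.trace_add, htr0, add_zero, smul_eq_mul]
      rw [e2, abs_mul]
      have h1 : |(Q x * B x * (P t x - P 0 x)).trace|
          ≤ 2 * ((K+1) * (2 * MΦ^2 * (K+1) * |t|)) := by
        calc |(Q x * B x * (P t x - P 0 x)).trace|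
            ≤ 2 * ‖Q x * B x * (P t x - P 0 x)‖ := trace_abs_le _
          _ ≤ 2 * ((K+1) * (2 * MΦ^2 * (K+1) * |t|)) := by
              have hn : ‖Q x * B x * (P t x - P 0 x)‖
                  ≤ (K+1) * (2 * MΦ^2 * (K+1) * |t|) := by
                calc ‖Q x * B x * (P t x - P 0 x)‖
                    ≤ ‖Q x * B x‖ * ‖P t x - P 0 x‖ := norm_mul_le _ _
                  _ ≤ (K+1) * (2 * MΦ^2 * (K+1) * |t|) := by
                      apply mul_le_mul _ (hPdiff2 x hxI) (norm_nonneg _) (by linarith)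
                      have := hK x hxI; linarith
              linarith
      calc |t| * |(Q x * B x * (P t x - P 0 x)).trace|
          ≤ |t| * (2 * ((K+1) * (2 * MΦ^2 * (K+1) * |t|))) :=
            mul_le_mul_of_nonneg_left h1 (abs_nonneg t)
        _ = C * (|t| * |t|) := by rw [hCdef]; ring
        _ = C * t^2 := by rw [abs_mul_abs_self]; ring
    -- MVT for g
    have hgd : |(Q 1 * P t 1).trace - (Q 0 * P t 0).trace| ≤ C * t^2 * (1 - 0) :=
      norm_image_sub_le_of_norm_deriv_le_segment'
        (f := fun x => (Q x * P t x).trace) (f' := fun x => (t • (Q x * B x * P t x)).trace)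
        (a := 0) (b := 1) (C := C * t^2)
        (fun y hy => (hg' y).hasDerivWithinAt)
        (fun y hy => by rw [Real.norm_eq_abs]; exact hgbound y hy)
        1 (by constructor <;> norm_num)
    have hQ1 : Q 1 = 1 := by rw [hQdef 1, hDirac, Matrix.adjugate_one]
    rw [hQ1, one_mul, hG0, Matrix.trace_one] at hgd
    have h2 : ((2 : ℕ) : ℝ) = (2 : ℝ) := by norm_num
    calc |(P t 1).trace - 2| = |(P t 1).trace - ((2:ℕ):ℝ)| := by norm_num
      _ ≤ C * t^2 * (1 - 0) := hgd
      _ = C * t^2 := by ring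
  -- conclude HasDerivAt
  have hf0 : (P 0 1).trace = 2 := by rw [hDirac, Matrix.trace_one]; norm_num
  rw [hasDerivAt_iff_isLittleO]
  rw [Asymptotics.isLittleO_iff]
  intro c hc
  rw [Metric.eventually_nhds_iff]
  refine ⟨min t0 (c / C), lt_min ht0pos (by positivity), fun t hdist => ?_⟩
  have habs : |t - 0| < min t0 (c / C) := by
    rwa [Real.dist_eq] at hdist
  rw [sub_zero] at habs
  have ht1 : |t| ≤ t0 := le_of_lt (lt_of_lt_of_le habs (min_le_left _ _))
  have ht2 : |t| ≤ c / C := le_of_lt (lt_of_lt_of_le habs (min_le_right _ _))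
  have := EST t ht1
  simp only [sub_zero, smul_zero, sub_zero, hf0]
  rw [Real.norm_eq_abs, Real.norm_eq_abs]
  calc |(P t 1).trace - 2| ≤ C * t^2 := this
    _ = C * |t| * |t| := by rw [pow_two, ← abs_mul_abs_self t]; ring
    _ ≤ C * (c / C) * |t| := by
        apply mul_le_mul_of_nonneg_right _ (abs_nonneg t)
        exact mul_le_mul_of_nonneg_left ht2 (le_of_lt hCpos)
    _ = c * |t| := by field_simp

end DiracAux


/-- At a Dirac point with `k = 0` (i.e. `Ψ(1; E*, 0) = I`), both first partial
derivatives of the discriminant `D(E,δ) = tr Ψ(1; E, δ)` of the perturbed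
photonic structure vanish. -/
theorem discriminant_first_derivatives_vanish_at_dirac
    (ε μ εt μt : ℝ → ℝ)
    (hεc : Continuous ε) (hμc : Continuous μ)
    (hεtc : Continuous εt) (hμtc : Continuous μt)
    (hεp : ∀ x, ε (x + 1) = ε x) (hμp : ∀ x, μ (x + 1) = μ x)
    (hεtp : ∀ x, εt (x + 1) = εt x) (hμtp : ∀ x, μt (x + 1) = μt x)
    (hεpos : ∀ x, 0 < ε x) (hμpos : ∀ x, 0 < μ x)
    (Ψ : ℝ → ℝ → ℝ → Matrix (Fin 2) (Fin 2) ℝ)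
    (hΨ0 : ∀ E δ : ℝ, Ψ 0 E δ = 1)
    (hΨ : ∀ x E δ : ℝ, ∀ i j, HasDerivAt (fun y => Ψ y E δ i j)
      ((!![(0 : ℝ), μ x + δ * μt x; -E * (ε x + δ * εt x), 0] * Ψ x E δ) i j) x)
    (Estar : ℝ)
    (hDirac : Ψ 1 Estar 0 = 1) :
    HasDerivAt (fun E => (Ψ 1 E 0).trace) 0 Estar ∧
    HasDerivAt (fun δ => (Ψ 1 Estar δ).trace) 0 0 := by
  set A0 : ℝ → Matrix (Fin 2) (Fin 2) ℝ := fun x => !![0, μ x; -Estar * ε x, 0] with hA0def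
  have htrA0 : ∀ x, (A0 x).trace = 0 := by
    intro x; simp [hA0def, Matrix.trace_fin_two]
  constructor
  · -- derivative in E
    set B : ℝ → Matrix (Fin 2) (Fin 2) ℝ := fun x => !![0, 0; -ε x, 0] with hBdef
    have hBc : Continuous B := by
      apply continuous_matrix
      intro i j
      fin_cases i <;> fin_cases j <;> simp [hBdef] <;> fun_prop
    have htrB : ∀ x, (B x).trace = 0 := by
      intro x; simp [hBdef, Matrix.trace_fin_two]
    have hsum : ∀ t x : ℝ, A0 x + t • B x
        = !![(0 : ℝ), μ x + 0 * μt x; -(Estar + t) * (ε x + 0 * εt x), 0] := by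
      intro t x
      ext i j
      fin_cases i <;> fin_cases j <;> simp [hA0def, hBdef] <;> ring
    have hkey := DiracAux.key A0 B hBc htrA0 htrB (fun t x => Ψ x (Estar + t) 0)
      (fun t => hΨ0 (Estar + t) 0)
      (fun t x i j => by rw [hsum t x]; exact hΨ x (Estar + t) 0 i j)
      (by show Ψ 1 (Estar + 0) 0 = 1; rw [add_zero]; exact hDirac)
    have hsub : HasDerivAt (fun E : ℝ => E - Estar) 1 Estar :=
      (hasDerivAt_id Estar).sub_const Estar
    have hcomp := HasDerivAt.comp_of_eq (hh₂ := hkey) (hh := hsub) (hy := (sub_self Estar).symm)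
    have : (fun E => (Ψ 1 E 0).trace)
        = (fun t => (Ψ 1 (Estar + t) 0).trace) ∘ (fun E => E - Estar) := by
      funext E; simp [Function.comp, add_sub_cancel]
    rw [this]
    simpa using hcomp
  · -- derivative in δ
    set B : ℝ → Matrix (Fin 2) (Fin 2) ℝ := fun x => !![0, μt x; -Estar * εt x, 0] with hBdef
    have hBc : Continuous B := by
      apply continuous_matrix
      intro i j
      fin_cases i <;> fin_cases j <;> simp [hBdef] <;> fun_prop
    have htrB : ∀ x, (B x).trace = 0 := by
      intro x; simp [hBdef, Matrix.trace_fin_two]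
    have hsum : ∀ t x : ℝ, A0 x + t • B x
        = !![(0 : ℝ), μ x + t * μt x; -Estar * (ε x + t * εt x), 0] := by
      intro t x
      ext i j
      fin_cases i <;> fin_cases j <;> simp [hA0def, hBdef] <;> ring
    exact DiracAux.key A0 B hBc htrA0 htrB (fun t x => Ψ x Estar t)
      (fun t => hΨ0 Estar t)
      (fun t x i j => by rw [hsum t x]; exact hΨ x Estar t i j)
      hDirac
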